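/- Let ρ be an n×n complex matrix that is positive semidefinite with trace 1 (a density matrix), and suppose ρ is classical, i.e., trace(ρ·(X·Y − Y·X)) = 0 for all n×n complex matrices X, Y. Then for every pair of positive semidefinite n×n complex matrices X, Y, the number trace(ρ·(X·Y + Y·X)) is a nonnegative real number (its real part is ≥ 0 and its imaginary part is 0). -/

import Mathlib

open Matrix ComplexOrder

lemma psd_trace_nonneg {n : ℕ} {A : Matrix (Fin n) (Fin n) ℂ}
    (hA : A.PosSemidef) : 0 ≤ A.trace := by
  exact hA.trace_nonneg

open scoped MatrixOrder in
lemma psd_exists_herm_sqrt {n : ℕ} {B : Matrix (Fin n) (Fin n) ℂ} (hB : B.PosSemidef) :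
    ∃ S : Matrix (Fin n) (Fin n) ℂ, S.IsHermitian ∧ S * S = B :=
  ⟨CFC.sqrt B, (CFC.sqrt_nonneg B).posSemidef.1, CFC.sqrt_mul_sqrt_self B hB.nonneg⟩

lemma psd_trace_mul_nonneg {n : ℕ} {A B : Matrix (Fin n) (Fin n) ℂ}
    (hA : A.PosSemidef) (hB : B.PosSemidef) : 0 ≤ (A * B).trace := by
  obtain ⟨S, hSh, hSS⟩ : ∃ S : Matrix (Fin n) (Fin n) ℂ, S.IsHermitian ∧ S * S = B :=
    psd_exists_herm_sqrt hB
  have h : (A * B).trace = (S * A * Sᴴ).trace := by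
    rw [hSh]
    calc (A * B).trace = (A * S * S).trace := by rw [mul_assoc, hSS]
      _ = (S * (A * S)).trace := by rw [Matrix.trace_mul_comm]
      _ = (S * A * S).trace := by rw [mul_assoc]
  rw [h]
  exact psd_trace_nonneg (hA.mul_mul_conjTranspose_same S)

/-- A classical density matrix gives a nonnegative real expectation value to
the anticommutator of any two positive semidefinite matrices. -/
theorem classical_state_anticommutator_nonneg
    {n : ℕ} (ρ : Matrix (Fin n) (Fin n) ℂ)
    (hρ : ρ.PosSemidef) (htr : ρ.trace = 1)
    (hcl : ∀ X Y : Matrix (Fin n) (Fin n) ℂ, (ρ * (X * Y - Y * X)).trace = 0) :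
    ∀ X Y : Matrix (Fin n) (Fin n) ℂ, X.PosSemidef → Y.PosSemidef →
      0 ≤ (ρ * (X * Y + Y * X)).trace.re ∧ (ρ * (X * Y + Y * X)).trace.im = 0 := by
  intro X Y hX hY
  have hswap : (ρ * (X * Y)).trace = (ρ * (Y * X)).trace := by
    have := hcl X Y
    rw [mul_sub, Matrix.trace_sub, sub_eq_zero] at this
    exact this
  have hsum : (ρ * (X * Y + Y * X)).trace = 2 * (ρ * (X * Y)).trace := by
    rw [mul_add, Matrix.trace_add, hswap]; ring
  obtain ⟨S, hSh, hSS⟩ : ∃ S : Matrix (Fin n) (Fin n) ℂ, S.IsHermitian ∧ S * S = X :=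
    psd_exists_herm_sqrt hX
  have hSY : (ρ * (X * Y)).trace = (S * ρ * S * Y).trace := by
    have h1 : (ρ * (S * (S * Y))).trace = (ρ * ((S * Y) * S)).trace := by
      have := hcl S (S * Y)
      rw [mul_sub, Matrix.trace_sub, sub_eq_zero] at this
      exact this
    calc (ρ * (X * Y)).trace = (ρ * (S * (S * Y))).trace := by
          rw [← mul_assoc S, hSS]
      _ = (ρ * ((S * Y) * S)).trace := h1
      _ = ((S * Y) * S * ρ).trace := by rw [Matrix.trace_mul_comm]
      _ = (ρ * (S * Y) * S).trace := by rw [Matrix.trace_mul_cycle]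
      _ = (S * (ρ * (S * Y))).trace := by rw [Matrix.trace_mul_comm]
      _ = (S * ρ * S * Y).trace := by rw [← mul_assoc, ← mul_assoc]
  have hSρS : (S * ρ * S).PosSemidef := by
    have := hρ.mul_mul_conjTranspose_same S
    rwa [hSh] at this
  have hpos : 0 ≤ (ρ * (X * Y + Y * X)).trace := by
    rw [hsum, hSY]
    have h := psd_trace_mul_nonneg hSρS hY
    positivity
  rw [Complex.le_def] at hpos
  exact ⟨by simpa using hpos.1, (hpos.2).symm⟩
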